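/- For the channel X1 = {2, 4}, X2 = Y = {0, 1, 2, 3}, Y = X2 mod X1, and every finite bounded delay set D, the capacity region of the ACC-MAC is strictly contained in the capacity region of the ACMAC: C_ACC-MAC = {(R1,R2) : R1 ≤ 1, R1 + R2 ≤ 2} ⊊ {(R1,R2) : R1 + R2 ≤ 2} = C_ACMAC (rates in bits, with R1, R2 ≥ 0); hence codeword side-information can be strictly weaker than message side-information. -/
import Mathlib

open scoped BigOperators
open Real

noncomputable section

namespace ACMACPaper

/-- A probability mass function on a finite type. -/
def IsPMF {α : Type*} [Fintype α] (p : α → ℝ) : Prop :=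
  (∀ a, 0 ≤ p a) ∧ ∑ a, p a = 1

/-- Shannon entropy in bits of a pmf on a finite type. -/
def ent {α : Type*} [Fintype α] (p : α → ℝ) : ℝ :=
  -∑ a, p a * Real.logb 2 (p a)

/-- Mutual information `I(A;B)` of a joint pmf on `α × β` (bits). -/
def mutInfo {α β : Type*} [Fintype α] [Fintype β] (p : α × β → ℝ) : ℝ :=
  ent (fun a => ∑ b, p (a, b)) + ent (fun b => ∑ a, p (a, b)) - ent p

/-- Conditional mutual information `I(A;B|C)` of a joint pmf on `α × β × γ` (bits),
`I(A;B|C) = H(A,C) + H(B,C) - H(A,B,C) - H(C)`. -/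
def condMutInfo {α β γ : Type*} [Fintype α] [Fintype β] [Fintype γ]
    (p : α × β × γ → ℝ) : ℝ :=
  ent (fun ac : α × γ => ∑ b, p (ac.1, b, ac.2))
    + ent (fun bc : β × γ => ∑ a, p (a, bc.1, bc.2))
    - ent p - ent (fun c : γ => ∑ a, ∑ b, p (a, b, c))

/-- Conditional entropy `H(A|B)` of a joint pmf on `α × β` (bits). -/
def condEnt {α β : Type*} [Fintype α] [Fintype β] (p : α × β → ℝ) : ℝ :=
  ent p - ent (fun b : β => ∑ a, p (a, b))

/-- Extension of a finite vector to integer indices; out-of-range symbols get a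
fixed (arbitrary) default value. -/
def extVec {n : ℕ} {A : Type*} [Inhabited A] (x : Fin n → A) (j : ℤ) : A :=
  if h : 0 ≤ j ∧ j < (n : ℤ) then x ⟨j.toNat, by omega⟩ else default

/-- The finite set of possible delays `D = {-d_min, …, d_max}`. -/
def delaySet (dmin dmax : ℕ) : Finset ℤ := Finset.Icc (-(dmin : ℤ)) (dmax : ℤ)

lemma delaySet_nonempty (dmin dmax : ℕ) : (delaySet dmin dmax).Nonempty :=
  ⟨0, by unfold delaySet; rw [Finset.mem_Icc]; omega⟩

variable {X1 X2 Y : Type*} [Fintype X1] [Fintype X2] [Fintype Y]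
  [Inhabited X1] [Inhabited X2]

/-- The `n`-letter law of the asynchronous channel with delay `d`:
`P_d(y^n | x1^n, x2^n) = ∏ i, P(y_i | x_{1,i-d}, x_{2,i})`. -/
def blockLaw (W : X1 → X2 → Y → ℝ) (d : ℤ) {n : ℕ}
    (x1 : Fin n → X1) (x2 : Fin n → X2) (y : Fin n → Y) : ℝ :=
  ∏ i : Fin n, W (extVec x1 (((i : ℕ) : ℤ) - d)) (x2 i) (y i)

/-- Average probability of error of a code, for delay `d`. -/
def avgErr (W : X1 → X2 → Y → ℝ) (d : ℤ) {n K1 K2 : ℕ}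
    (f1 : Fin K1 → Fin n → X1) (f2 : Fin K1 → Fin K2 → Fin n → X2)
    (g : (Fin n → Y) → Fin K1 × Fin K2) : ℝ :=
  (1 / ((K1 : ℝ) * (K2 : ℝ))) * ∑ m1 : Fin K1, ∑ m2 : Fin K2, ∑ y : Fin n → Y,
    (if g y ≠ (m1, m2) then blockLaw W d (f1 m1) (f2 m1 m2) y else 0)

/-- Achievability for the ACMAC (informed encoder knows the message of the
uninformed one): for every `ε > 0` there is a code whose average error
probability is at most `ε` simultaneously for every delay `d ∈ D`. -/
def ACMACAchievable (W : X1 → X2 → Y → ℝ) (dmin dmax : ℕ) (R : ℝ × ℝ) : Prop :=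
  0 ≤ R.1 ∧ 0 ≤ R.2 ∧
  ∀ ε : ℝ, 0 < ε → ∃ (n K1 K2 : ℕ) (f1 : Fin K1 → Fin n → X1)
    (f2 : Fin K1 → Fin K2 → Fin n → X2) (g : (Fin n → Y) → Fin K1 × Fin K2),
      0 < n ∧ (2 : ℝ) ^ ((n : ℝ) * R.1) ≤ (K1 : ℝ) ∧
      (2 : ℝ) ^ ((n : ℝ) * R.2) ≤ (K2 : ℝ) ∧
      ∀ d ∈ delaySet dmin dmax, avgErr W d f1 f2 g ≤ ε

/-- The capacity region of the ACMAC: the closure of the set of achievable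
rate pairs. -/
def ACMACCapacity (W : X1 → X2 → Y → ℝ) (dmin dmax : ℕ) : Set (ℝ × ℝ) :=
  closure {R | ACMACAchievable W dmin dmax R}

end ACMACPaper

namespace ACMACPaper

variable {X1 X2 Y : Type*} [Fintype X1] [Fintype X2] [Fintype Y]
  [Inhabited X1] [Inhabited X2]

/-- Achievability for the ACC-MAC: the informed encoder knows the *codeword*
of the uninformed user (its encoder is a map `X1^n × M2 → X2^n`), not its
message. -/
def ACCMACAchievable (W : X1 → X2 → Y → ℝ) (dmin dmax : ℕ) (R : ℝ × ℝ) : Prop :=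
  0 ≤ R.1 ∧ 0 ≤ R.2 ∧
  ∀ ε : ℝ, 0 < ε → ∃ (n K1 K2 : ℕ) (f1 : Fin K1 → Fin n → X1)
    (f2 : (Fin n → X1) → Fin K2 → Fin n → X2) (g : (Fin n → Y) → Fin K1 × Fin K2),
      0 < n ∧ (2 : ℝ) ^ ((n : ℝ) * R.1) ≤ (K1 : ℝ) ∧
      (2 : ℝ) ^ ((n : ℝ) * R.2) ≤ (K2 : ℝ) ∧
      ∀ d ∈ delaySet dmin dmax, avgErr W d f1 (fun m1 m2 => f2 (f1 m1) m2) g ≤ ε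

/-- The capacity region of the ACC-MAC. -/
def ACCMACCapacity (W : X1 → X2 → Y → ℝ) (dmin dmax : ℕ) : Set (ℝ × ℝ) :=
  closure {R | ACCMACAchievable W dmin dmax R}

end ACMACPaper

namespace ACMACPaper

/-- The input alphabet `X1 = {2, 4}` of the example channel. -/
abbrev X1ex : Type := ↥({2, 4} : Finset ℕ)

instance : Inhabited X1ex := ⟨⟨2, by decide⟩⟩

/-- The deterministic output `y = x2 mod x1` of the example channel
(`x1 ∈ {2,4}`, `x2, y ∈ {0,1,2,3}`). -/
def outEx (x1 : X1ex) (x2 : Fin 4) : Fin 4 :=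
  ⟨(x2 : ℕ) % (x1 : ℕ), lt_of_le_of_lt (Nat.mod_le _ _) x2.isLt⟩

/-- The example channel `Y = X2 mod X1` as a transition pmf. -/
def Wex (x1 : X1ex) (x2 : Fin 4) (y : Fin 4) : ℝ :=
  if y = outEx x1 x2 then 1 else 0

end ACMACPaper

namespace ACMACPaper

/- ======== auxiliary machinery for the proof ======== -/




lemma sum_div_pow_mod (b : ℕ) :
    ∀ (m e : ℕ), e < b ^ m → ∑ j ∈ Finset.range m, e / b ^ j % b * b ^ j = e := by
  intro m
  induction m with
  | zero => intro e he; simp at he ⊢; omega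
  | succ m ih =>
    intro e he
    rw [Finset.sum_range_succ']
    have h1 : ∀ j, e / b ^ (j+1) % b * b ^ (j+1) = b * ((e / b) / b ^ j % b * b ^ j) := by
      intro j
      rw [Nat.div_div_eq_div_mul, ← pow_succ', pow_succ']
      ring
    simp only [h1]
    rw [← Finset.mul_sum, ih (e / b) (by
      apply Nat.div_lt_of_lt_mul; rwa [← pow_succ'])]
    have := Nat.mod_add_div e b
    simp only [pow_zero, Nat.div_one, mul_one]
    omega

lemma sum_ind_lt (N K : ℕ) (hK : K ≤ N) :
    ∑ i ∈ Finset.range N, (if i < K then 1 else 0) = K := by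
  induction N with
  | zero => simp; omega
  | succ N ih =>
    rw [Finset.sum_range_succ]
    by_cases h : N < K
    · have hKN : K = N + 1 := by omega
      subst hKN
      rw [if_pos h]
      have : ∑ i ∈ Finset.range N, (if i < N + 1 then 1 else 0)
          = ∑ i ∈ Finset.range N, 1 := by
        apply Finset.sum_congr rfl
        intro i hi
        rw [Finset.mem_range] at hi
        rw [if_pos (by omega)]
      rw [this]; simp
    · rw [if_neg h, ih (by omega)]; ring

/-- The deterministic output sequence of the example channel under delay `d`. -/
def outF (d : ℤ) {n : ℕ} (x1 : Fin n → X1ex) (x2 : Fin n → Fin 4) : Fin n → Fin 4 :=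
  fun i => outEx (extVec x1 (((i : ℕ) : ℤ) - d)) (x2 i)

lemma blockLaw_eq_ite (d : ℤ) {n : ℕ} (x1 : Fin n → X1ex) (x2 : Fin n → Fin 4)
    (y : Fin n → Fin 4) :
    blockLaw Wex d x1 x2 y = if y = outF d x1 x2 then 1 else 0 := by
  unfold blockLaw Wex
  by_cases h : y = outF d x1 x2
  · subst h
    rw [if_pos rfl]
    apply Finset.prod_eq_one
    intro i _
    exact if_pos rfl
  · rw [if_neg h]
    have hex : ∃ i, y i ≠ outF d x1 x2 i := by
      by_contra hc; push_neg at hc; exact h (funext hc)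
    obtain ⟨i, hi⟩ := hex
    exact Finset.prod_eq_zero (Finset.mem_univ i) (if_neg hi)

lemma sum_y_err (d : ℤ) {n : ℕ} {α : Type*} [DecidableEq α]
    (x1 : Fin n → X1ex) (x2 : Fin n → Fin 4)
    (g : (Fin n → Fin 4) → α) (p : α) :
    ∑ y : Fin n → Fin 4, (if g y ≠ p then blockLaw Wex d x1 x2 y else 0)
      = if g (outF d x1 x2) ≠ p then 1 else 0 := by
  have h1 : ∀ y : Fin n → Fin 4, (if g y ≠ p then blockLaw Wex d x1 x2 y else 0)
      = if y = outF d x1 x2 then (if g y ≠ p then (1:ℝ) else 0) else 0 := by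
    intro y
    rw [blockLaw_eq_ite]
    by_cases h : y = outF d x1 x2 <;> by_cases h2 : g y ≠ p <;> simp [h, h2]
  simp only [h1]
  rw [Finset.sum_ite_eq' Finset.univ (outF d x1 x2)]
  simp

lemma avgErr_eq_card (d : ℤ) {n K1 K2 : ℕ}
    (f1 : Fin K1 → Fin n → X1ex) (f2 : Fin K1 → Fin K2 → Fin n → Fin 4)
    (g : (Fin n → Fin 4) → Fin K1 × Fin K2) :
    avgErr Wex d f1 f2 g = (1 / ((K1:ℝ) * K2)) *
      ((Finset.univ.filter (fun mm : Fin K1 × Fin K2 =>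
        g (outF d (f1 mm.1) (f2 mm.1 mm.2)) ≠ mm)).card : ℝ) := by
  unfold avgErr
  congr 1
  calc ∑ m1 : Fin K1, ∑ m2 : Fin K2, ∑ y : Fin n → Fin 4,
        (if g y ≠ (m1, m2) then blockLaw Wex d (f1 m1) (f2 m1 m2) y else 0)
      = ∑ m1 : Fin K1, ∑ m2 : Fin K2,
          (if g (outF d (f1 m1) (f2 m1 m2)) ≠ (m1, m2) then (1:ℝ) else 0) := by
        apply Finset.sum_congr rfl; intro m1 _
        apply Finset.sum_congr rfl; intro m2 _
        exact sum_y_err d (f1 m1) (f2 m1 m2) g (m1, m2)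
    _ = ∑ mm : Fin K1 × Fin K2,
          (if g (outF d (f1 mm.1) (f2 mm.1 mm.2)) ≠ mm then (1:ℝ) else 0) := by
        rw [Fintype.sum_prod_type]
    _ = _ := by rw [Finset.sum_boole]

lemma avgErr_eq_zero (d : ℤ) {n K1 K2 : ℕ}
    (f1 : Fin K1 → Fin n → X1ex) (f2 : Fin K1 → Fin K2 → Fin n → Fin 4)
    (g : (Fin n → Fin 4) → Fin K1 × Fin K2)
    (hg : ∀ mm : Fin K1 × Fin K2, g (outF d (f1 mm.1) (f2 mm.1 mm.2)) = mm) :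
    avgErr Wex d f1 f2 g = 0 := by
  rw [avgErr_eq_card]
  have : (Finset.univ.filter (fun mm : Fin K1 × Fin K2 =>
        g (outF d (f1 mm.1) (f2 mm.1 mm.2)) ≠ mm)) = ∅ := by
    apply Finset.filter_eq_empty_iff.mpr
    intro mm _
    simp [hg mm]
  rw [this]
  simp

lemma good_card_ge (d : ℤ) {n K1 K2 : ℕ} {ε : ℝ}
    (f1 : Fin K1 → Fin n → X1ex) (f2 : Fin K1 → Fin K2 → Fin n → Fin 4)
    (g : (Fin n → Fin 4) → Fin K1 × Fin K2)
    (hK1 : 0 < K1) (hK2 : 0 < K2)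
    (hε : avgErr Wex d f1 f2 g ≤ ε) :
    (1 - ε) * ((K1:ℝ) * K2) ≤ ((Finset.univ.filter (fun mm : Fin K1 × Fin K2 =>
        g (outF d (f1 mm.1) (f2 mm.1 mm.2)) = mm)).card : ℝ) := by
  rw [avgErr_eq_card] at hε
  set P := fun mm : Fin K1 × Fin K2 => g (outF d (f1 mm.1) (f2 mm.1 mm.2)) = mm with hP
  have hBG : (Finset.univ.filter P).card
      + (Finset.univ.filter (fun mm => ¬ P mm)).card = K1 * K2 := by
    rw [Finset.card_filter_add_card_filter_not (p := P)]
    simp [Finset.card_univ]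
  have hKpos : (0:ℝ) < (K1:ℝ) * K2 := by positivity
  have h1 : (1/((K1:ℝ)*K2)) * ((Finset.univ.filter (fun mm => ¬ P mm)).card : ℝ)
      * ((K1:ℝ)*K2) = ((Finset.univ.filter (fun mm => ¬ P mm)).card : ℝ) := by
    field_simp
  have hBad : ((Finset.univ.filter (fun mm => ¬ P mm)).card : ℝ) ≤ ε * ((K1:ℝ)*K2) := by
    have h2 := mul_le_mul_of_nonneg_right hε (le_of_lt hKpos)
    rw [h1] at h2
    exact h2
  have hcast : ((Finset.univ.filter P).card : ℝ)
      + ((Finset.univ.filter (fun mm => ¬ P mm)).card : ℝ) = (K1:ℝ) * K2 := by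
    rw [← Nat.cast_add, hBG]; push_cast; ring
  nlinarith [hcast, hBad]


/- ======== rpow helpers ======== -/

lemma rpow_nat_eq (m : ℕ) : (2:ℝ) ^ ((m:ℕ):ℝ) = ((2^m : ℕ) : ℝ) := by
  rw [Real.rpow_natCast]; push_cast; ring

lemma rpow_mono {x y : ℝ} (h : x ≤ y) : (2:ℝ)^x ≤ (2:ℝ)^y :=
  Real.rpow_le_rpow_of_exponent_le one_le_two h

/- ======== converse counting ======== -/

lemma sum_converse {n K1 K2 : ℕ} {ε : ℝ}
    (f1 : Fin K1 → Fin n → X1ex) (f2 : Fin K1 → Fin K2 → Fin n → Fin 4)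
    (g : (Fin n → Fin 4) → Fin K1 × Fin K2)
    (hK1 : 0 < K1) (hK2 : 0 < K2)
    (hε : avgErr Wex 0 f1 f2 g ≤ ε) :
    (1 - ε) * ((K1:ℝ) * K2) ≤ (4:ℝ) ^ n := by
  have hgood := good_card_ge 0 f1 f2 g hK1 hK2 hε
  set G := Finset.univ.filter (fun mm : Fin K1 × Fin K2 =>
      g (outF 0 (f1 mm.1) (f2 mm.1 mm.2)) = mm) with hG
  have hinj : Set.InjOn (fun mm : Fin K1 × Fin K2 =>
      outF 0 (f1 mm.1) (f2 mm.1 mm.2)) ↑G := by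
    intro x hx y hy hxy
    simp only [hG, Finset.coe_filter, Set.mem_setOf_eq, Finset.mem_univ, true_and] at hx hy
    rw [← hx, ← hy]
    simp only [hxy]
  have hcard : G.card ≤ Fintype.card (Fin n → Fin 4) :=
    (Finset.card_le_card_of_injOn _ (fun a _ => Finset.mem_univ _) hinj).trans
      (le_of_eq Finset.card_univ)
  have h4 : Fintype.card (Fin n → Fin 4) = 4 ^ n := by
    rw [Fintype.card_fun]; simp
  rw [h4] at hcard
  calc (1-ε) * ((K1:ℝ)*K2) ≤ (G.card : ℝ) := hgood
    _ ≤ ((4^n : ℕ) : ℝ) := by exact_mod_cast hcard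
    _ = (4:ℝ)^n := by push_cast; ring

lemma acc_converse {n K1 K2 : ℕ} {ε : ℝ}
    (f1 : Fin K1 → Fin n → X1ex) (f2 : (Fin n → X1ex) → Fin K2 → Fin n → Fin 4)
    (g : (Fin n → Fin 4) → Fin K1 × Fin K2)
    (hK1 : 0 < K1) (hK2 : 0 < K2) (hεpos : 0 ≤ ε)
    (hε : avgErr Wex 0 f1 (fun m1 m2 => f2 (f1 m1) m2) g ≤ ε) :
    (1 - ε) * (K1:ℝ) ≤ (2:ℝ) ^ n := by
  have hgood := good_card_ge 0 f1 (fun m1 m2 => f2 (f1 m1) m2) g hK1 hK2 hε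
  set G := Finset.univ.filter (fun mm : Fin K1 × Fin K2 =>
      g (outF 0 (f1 mm.1) (f2 (f1 mm.1) mm.2)) = mm) with hG
  have hinj : Set.InjOn (fun mm : Fin K1 × Fin K2 => (f1 mm.1, mm.2)) ↑G := by
    intro x hx y hy hxy
    simp only [hG, Finset.coe_filter, Set.mem_setOf_eq, Finset.mem_univ, true_and] at hx hy
    have hxy' : (f1 x.1, x.2) = (f1 y.1, y.2) := hxy
    simp only [Prod.mk.injEq] at hxy'
    obtain ⟨h1, h2⟩ := hxy'
    rw [← hx, ← hy, h1, h2]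
  have hcard : G.card ≤ Fintype.card ((Fin n → X1ex) × Fin K2) :=
    (Finset.card_le_card_of_injOn _ (fun a _ => Finset.mem_univ _) hinj).trans
      (le_of_eq Finset.card_univ)
  have hX1 : Fintype.card X1ex = 2 := by
    rw [Fintype.card_coe]; decide
  have h2 : Fintype.card ((Fin n → X1ex) × Fin K2) = 2^n * K2 := by
    rw [Fintype.card_prod, Fintype.card_fun, hX1]; simp
  rw [h2] at hcard
  have hcast : (G.card : ℝ) ≤ (2:ℝ)^n * K2 := by
    calc (G.card : ℝ) ≤ ((2^n * K2 : ℕ) : ℝ) := by exact_mod_cast hcard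
      _ = (2:ℝ)^n * K2 := by push_cast; ring
  have hK2pos : (0:ℝ) < (K2:ℝ) := by exact_mod_cast hK2
  have := hgood.trans hcast
  nlinarith [this, hK2pos]

/-- If `R` is ACMAC- (or, a fortiori, ACC-MAC-) achievable in the sense of a family
of codes with rates `≥ 2^{nRi}`, then `R1 + R2 ≤ 2`.  Stated as: from any single
code with small enough error, contradiction if `R1+R2 > 2`. -/
lemma rate_sum_le_two {R1 R2 : ℝ} (hR1 : 0 ≤ R1) (hR2 : 0 ≤ R2)
    (hach : ∀ ε : ℝ, 0 < ε → ∃ (n K1 K2 : ℕ) (f1 : Fin K1 → Fin n → X1ex)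
      (f2 : Fin K1 → Fin K2 → Fin n → Fin 4) (g : (Fin n → Fin 4) → Fin K1 × Fin K2),
      0 < n ∧ (2:ℝ)^((n:ℝ)*R1) ≤ (K1:ℝ) ∧ (2:ℝ)^((n:ℝ)*R2) ≤ (K2:ℝ) ∧
      avgErr Wex 0 f1 f2 g ≤ ε) :
    R1 + R2 ≤ 2 := by
  by_contra hc
  push_neg at hc
  set s := R1 + R2 - 2 with hs
  have hspos : 0 < s := by simp [hs]; linarith
  have hlt1 : (2:ℝ)^(-s) < 1 := by
    apply Real.rpow_lt_one_of_one_lt_of_neg one_lt_two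
    linarith
  have hpos' : (0:ℝ) < (2:ℝ)^(-s) := Real.rpow_pos_of_pos two_pos _
  set ε := (1 - (2:ℝ)^(-s))/2 with hε
  have hεpos : 0 < ε := by simp [hε]; linarith
  obtain ⟨n, K1, K2, f1, f2, g, hn, hKR1, hKR2, herr⟩ := hach ε hεpos
  have hK1 : 0 < K1 := by
    by_contra h
    have : K1 = 0 := by omega
    rw [this] at hKR1
    simp at hKR1
    nlinarith [Real.rpow_pos_of_pos (two_pos (α := ℝ)) ((n:ℝ)*R1)]
  have hK2 : 0 < K2 := by
    by_contra h
    have : K2 = 0 := by omega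
    rw [this] at hKR2
    simp at hKR2
    nlinarith [Real.rpow_pos_of_pos (two_pos (α := ℝ)) ((n:ℝ)*R2)]
  have hbound := sum_converse f1 f2 g hK1 hK2 herr
  -- (1-ε) * 2^{n(R1+R2)} ≤ 4^n
  have h1ε : 0 < 1 - ε := by simp [hε]; linarith
  have hprod : (2:ℝ)^((n:ℝ)*R1) * (2:ℝ)^((n:ℝ)*R2) ≤ (K1:ℝ)*K2 := by
    apply mul_le_mul hKR1 hKR2 (le_of_lt (Real.rpow_pos_of_pos two_pos _))
    positivity
  have hsum : (2:ℝ)^((n:ℝ)*(R1+R2)) = (2:ℝ)^((n:ℝ)*R1) * (2:ℝ)^((n:ℝ)*R2) := by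
    rw [← Real.rpow_add two_pos]; ring_nf
  have h4n : (4:ℝ)^n = (2:ℝ)^((2*n : ℝ)) := by
    rw [show (4:ℝ) = 2^(2:ℕ) by norm_num, ← pow_mul, ← Real.rpow_natCast]
    push_cast; ring_nf
  have hkey : (1-ε) * (2:ℝ)^((n:ℝ)*(R1+R2)) ≤ (2:ℝ)^((2*n:ℝ)) := by
    rw [← h4n]
    calc (1-ε) * (2:ℝ)^((n:ℝ)*(R1+R2))
        = (1-ε) * ((2:ℝ)^((n:ℝ)*R1) * (2:ℝ)^((n:ℝ)*R2)) := by rw [hsum]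
      _ ≤ (1-ε) * ((K1:ℝ)*K2) := by
          apply mul_le_mul_of_nonneg_left hprod (le_of_lt h1ε)
      _ ≤ (4:ℝ)^n := hbound
  -- divide by 2^{2n}
  have hdiv : (1-ε) * (2:ℝ)^((n:ℝ)*(R1+R2) - 2*n) ≤ 1 := by
    have h2n : (0:ℝ) < (2:ℝ)^((2*n:ℝ)) := Real.rpow_pos_of_pos two_pos _
    rw [Real.rpow_sub two_pos]
    rw [mul_div_assoc' ]
    rw [div_le_one h2n]
    exact hkey
  have hexp : s ≤ (n:ℝ)*(R1+R2) - 2*n := by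
    have hn1 : (1:ℝ) ≤ n := by exact_mod_cast hn
    have : (n:ℝ)*(R1+R2) - 2*n = (n:ℝ)*s := by simp [hs]; ring
    rw [this]
    nlinarith
  have hmono : (2:ℝ)^s ≤ (2:ℝ)^((n:ℝ)*(R1+R2) - 2*n) := rpow_mono hexp
  have hspow : (0:ℝ) < (2:ℝ)^s := Real.rpow_pos_of_pos two_pos _
  have hinv : (2:ℝ)^(-s) * (2:ℝ)^s = 1 := by
    rw [← Real.rpow_add two_pos]; simp
  have h1εgt : (2:ℝ)^(-s) < 1 - ε := by
    simp only [hε]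
    linarith
  nlinarith [hdiv, hmono, hspow, hinv, h1εgt]

lemma rate_R1_le_one {R1 R2 : ℝ} (hR1 : 0 ≤ R1) (hR2 : 0 ≤ R2)
    (hach : ∀ ε : ℝ, 0 < ε → ∃ (n K1 K2 : ℕ) (f1 : Fin K1 → Fin n → X1ex)
      (f2 : (Fin n → X1ex) → Fin K2 → Fin n → Fin 4)
      (g : (Fin n → Fin 4) → Fin K1 × Fin K2),
      0 < n ∧ (2:ℝ)^((n:ℝ)*R1) ≤ (K1:ℝ) ∧ (2:ℝ)^((n:ℝ)*R2) ≤ (K2:ℝ) ∧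
      avgErr Wex 0 f1 (fun m1 m2 => f2 (f1 m1) m2) g ≤ ε) :
    R1 ≤ 1 := by
  by_contra hc
  push_neg at hc
  set s := R1 - 1 with hs
  have hspos : 0 < s := by simp [hs]; linarith
  have hlt1 : (2:ℝ)^(-s) < 1 := by
    apply Real.rpow_lt_one_of_one_lt_of_neg one_lt_two
    linarith
  have hpos' : (0:ℝ) < (2:ℝ)^(-s) := Real.rpow_pos_of_pos two_pos _
  set ε := (1 - (2:ℝ)^(-s))/2 with hε
  have hεpos : 0 < ε := by simp [hε]; linarith
  obtain ⟨n, K1, K2, f1, f2, g, hn, hKR1, hKR2, herr⟩ := hach ε hεpos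
  have hK1 : 0 < K1 := by
    by_contra h
    have : K1 = 0 := by omega
    rw [this] at hKR1
    simp at hKR1
    nlinarith [Real.rpow_pos_of_pos (two_pos (α := ℝ)) ((n:ℝ)*R1)]
  have hK2 : 0 < K2 := by
    by_contra h
    have : K2 = 0 := by omega
    rw [this] at hKR2
    simp at hKR2
    nlinarith [Real.rpow_pos_of_pos (two_pos (α := ℝ)) ((n:ℝ)*R2)]
  have h1ε : 0 < 1 - ε := by simp [hε]; linarith
  have hbound := acc_converse f1 f2 g hK1 hK2 (le_of_lt hεpos) herr
  have hkey : (1-ε) * (2:ℝ)^((n:ℝ)*R1) ≤ (2:ℝ)^((n:ℝ)) := by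
    calc (1-ε) * (2:ℝ)^((n:ℝ)*R1) ≤ (1-ε) * K1 :=
        mul_le_mul_of_nonneg_left hKR1 (le_of_lt h1ε)
      _ ≤ (2:ℝ)^n := hbound
      _ = (2:ℝ)^((n:ℝ)) := by rw [← Real.rpow_natCast]
  have hdiv : (1-ε) * (2:ℝ)^((n:ℝ)*R1 - n) ≤ 1 := by
    have h2n : (0:ℝ) < (2:ℝ)^((n:ℝ)) := Real.rpow_pos_of_pos two_pos _
    rw [Real.rpow_sub two_pos, mul_div_assoc', div_le_one h2n]
    exact hkey
  have hexp : s ≤ (n:ℝ)*R1 - n := by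
    have hn1 : (1:ℝ) ≤ n := by exact_mod_cast hn
    have : (n:ℝ)*R1 - n = (n:ℝ)*s := by simp [hs]; ring
    rw [this]
    nlinarith
  have hmono : (2:ℝ)^s ≤ (2:ℝ)^((n:ℝ)*R1 - n) := rpow_mono hexp
  have hspow : (0:ℝ) < (2:ℝ)^s := Real.rpow_pos_of_pos two_pos _
  have hinv : (2:ℝ)^(-s) * (2:ℝ)^s = 1 := by
    rw [← Real.rpow_add two_pos]; simp
  have h1εgt : (2:ℝ)^(-s) < 1 - ε := by
    simp only [hε]
    linarith
  nlinarith [hdiv, hmono, hspow, hinv, h1εgt]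



/-- read position `k` of `y`, or `0` if out of range -/
def geti {n : ℕ} (y : Fin n → Fin 4) (k : ℕ) : ℕ :=
  if h : k < n then (y ⟨k, h⟩ : ℕ) else 0

lemma outEx_four (x2 : Fin 4) : outEx ⟨4, by decide⟩ x2 = x2 := by
  unfold outEx
  apply Fin.ext
  simp only []
  exact Nat.mod_eq_of_lt x2.isLt

/-- The ACMAC achievability construction: zero-error code using `x1 ≡ 4`. -/
lemma acmac_ach (dmin dmax : ℕ) (R : ℝ × ℝ) (h1 : 0 ≤ R.1) (h2 : 0 ≤ R.2)
    (hs : R.1 + R.2 < 2) : ACMACAchievable Wex dmin dmax R := by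
  refine ⟨h1, h2, ?_⟩
  have ht : 0 < 2 - (R.1 + R.2) := by linarith
  obtain ⟨n, hn⟩ := exists_nat_gt ((2 + 2*((dmax:ℝ)+dmin)) / (2 - (R.1+R.2)))
  have hcn : (dmax:ℝ) + dmin + 1 < n := by
    have hle : (2 + 2*((dmax:ℝ)+dmin)) / 2 ≤ (2 + 2*((dmax:ℝ)+dmin)) / (2 - (R.1+R.2)) := by
      apply div_le_div_of_nonneg_left (by positivity) ht
      linarith
    have : (2 + 2*((dmax:ℝ)+dmin)) / 2 = 1 + ((dmax:ℝ)+dmin) := by ring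
    linarith
  have hcnn : dmax + dmin + 1 < n := by exact_mod_cast hcn
  set m := n - (dmax + dmin) with hm
  have hnm : n = m + dmax + dmin := by omega
  set K1 := ⌈(2:ℝ)^((n:ℝ)*R.1)⌉₊ with hK1
  set K2 := ⌈(2:ℝ)^((n:ℝ)*R.2)⌉₊ with hK2
  have hp1 : (0:ℝ) < (2:ℝ)^((n:ℝ)*R.1) := Real.rpow_pos_of_pos two_pos _
  have hp2 : (0:ℝ) < (2:ℝ)^((n:ℝ)*R.2) := Real.rpow_pos_of_pos two_pos _
  have hK1pos : 0 < K1 := Nat.ceil_pos.mpr hp1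
  have hK2pos : 0 < K2 := Nat.ceil_pos.mpr hp2
  have hge1 : (1:ℝ) ≤ (2:ℝ)^((n:ℝ)*R.1) := by
    rw [show (1:ℝ) = (2:ℝ)^(0:ℝ) by simp]
    exact rpow_mono (by positivity)
  have hge2 : (1:ℝ) ≤ (2:ℝ)^((n:ℝ)*R.2) := by
    rw [show (1:ℝ) = (2:ℝ)^(0:ℝ) by simp]
    exact rpow_mono (by positivity)
  -- K1 * K2 ≤ 4 ^ m
  have hKprod : K1 * K2 ≤ 4 ^ m := by
    have hub1 : (K1:ℝ) ≤ 2 * (2:ℝ)^((n:ℝ)*R.1) := by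
      have := Nat.ceil_lt_add_one (le_of_lt hp1)
      calc (K1:ℝ) ≤ (2:ℝ)^((n:ℝ)*R.1) + 1 := le_of_lt this
        _ ≤ 2 * (2:ℝ)^((n:ℝ)*R.1) := by linarith
    have hub2 : (K2:ℝ) ≤ 2 * (2:ℝ)^((n:ℝ)*R.2) := by
      have := Nat.ceil_lt_add_one (le_of_lt hp2)
      calc (K2:ℝ) ≤ (2:ℝ)^((n:ℝ)*R.2) + 1 := le_of_lt this
        _ ≤ 2 * (2:ℝ)^((n:ℝ)*R.2) := by linarith
    have hexp : (n:ℝ)*R.1 + (n:ℝ)*R.2 + 2 ≤ 2*(m:ℝ) := by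
      have hmr : (m:ℝ) = (n:ℝ) - (dmax + dmin) := by
        rw [hm]
        rw [Nat.cast_sub (by omega)]
        push_cast; ring
      have hmul := (div_lt_iff₀ ht).mp hn
      rw [hmr]
      push_cast
      nlinarith
    have hmain : (K1:ℝ) * K2 ≤ (4:ℝ)^m := by
      calc (K1:ℝ) * K2 ≤ (2 * (2:ℝ)^((n:ℝ)*R.1)) * (2 * (2:ℝ)^((n:ℝ)*R.2)) := by
            apply mul_le_mul hub1 hub2 (Nat.cast_nonneg _) (by positivity)
        _ = (2:ℝ)^((n:ℝ)*R.1 + (n:ℝ)*R.2 + 2) := by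
            rw [Real.rpow_add two_pos, Real.rpow_add two_pos]
            rw [show (2:ℝ)^(2:ℝ) = 4 by
              rw [show (2:ℝ) = ((2:ℕ):ℝ) by norm_num, Real.rpow_natCast]; norm_num]
            ring
        _ ≤ (2:ℝ)^(2*(m:ℝ)) := rpow_mono hexp
        _ = (4:ℝ)^m := by
            rw [show (2:ℝ)*(m:ℝ) = ((2*m : ℕ):ℝ) by push_cast; ring, Real.rpow_natCast,
              pow_mul]
            norm_num
    have : ((K1 * K2 : ℕ) : ℝ) ≤ ((4^m : ℕ) : ℝ) := by
      push_cast
      exact hmain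
    exact_mod_cast this
  intro ε hε
  set f1c : Fin K1 → Fin n → X1ex := fun _ _ => ⟨4, by decide⟩ with hf1c
  set f2c : Fin K1 → Fin K2 → Fin n → Fin 4 :=
    fun m1 m2 i => ⟨((m2:ℕ) + (m1:ℕ) * K2) / 4^((i:ℕ) - dmax) % 4, by omega⟩ with hf2c
  set gc : (Fin n → Fin 4) → Fin K1 × Fin K2 := fun y =>
      (⟨(∑ j ∈ Finset.range m, geti y (dmax + j) * 4^j) / K2 % K1, Nat.mod_lt _ hK1pos⟩,
       ⟨(∑ j ∈ Finset.range m, geti y (dmax + j) * 4^j) % K2, Nat.mod_lt _ hK2pos⟩) with hgc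
  refine ⟨n, K1, K2, f1c, f2c, gc, by omega, Nat.le_ceil _, Nat.le_ceil _, ?_⟩
  intro d hd
  rw [delaySet, Finset.mem_Icc] at hd
  have hg : ∀ mm : Fin K1 × Fin K2, gc (outF d (f1c mm.1) (f2c mm.1 mm.2)) = mm := by
    intro mm
    obtain ⟨m1, m2⟩ := mm
    set e := (m2:ℕ) + (m1:ℕ) * K2 with he
    have heK : e < K1 * K2 := by
      have h2 := m2.isLt
      have h5 : (m1:ℕ) * K2 + K2 ≤ K1 * K2 := by
        calc (m1:ℕ) * K2 + K2 = ((m1:ℕ) + 1) * K2 := by ring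
          _ ≤ K1 * K2 := Nat.mul_le_mul_right _ (Nat.succ_le_of_lt m1.isLt)
      omega
    have heM : e < 4 ^ m := lt_of_lt_of_le heK hKprod
    set yv : Fin n → Fin 4 := outF d (f1c m1) (f2c m1 m2) with hyv
    have hout : ∀ j, j < m → ∀ (hj : dmax + j < n),
        (yv ⟨dmax + j, hj⟩ : ℕ) = e / 4^j % 4 := by
      intro j hjm hj
      rw [hyv]
      unfold outF
      have hrange : (0:ℤ) ≤ ((dmax + j : ℕ):ℤ) - d ∧ ((dmax + j : ℕ):ℤ) - d < n := by
        constructor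
        · push_cast; omega
        · push_cast; omega
      rw [extVec, dif_pos hrange]
      simp only [hf1c, hf2c]
      rw [outEx_four]
      simp only [Fin.val_mk]
      rw [← he]
      have hj' : dmax + j - dmax = j := by omega
      rw [hj']
    have hsum : (∑ j ∈ Finset.range m, geti yv (dmax + j) * 4^j) = e := by
      rw [← sum_div_pow_mod 4 m e heM]
      apply Finset.sum_congr rfl
      intro j hj
      rw [Finset.mem_range] at hj
      have hjn : dmax + j < n := by omega
      unfold geti
      rw [dif_pos hjn, hout j hj hjn]
    show gc yv = (m1, m2)
    rw [hgc]
    simp only []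
    rw [hsum]
    apply Prod.ext
    · apply Fin.ext
      simp only [Fin.val_mk]
      rw [he, Nat.add_mul_div_right _ _ hK2pos, Nat.div_eq_of_lt m2.isLt, Nat.zero_add]
      exact Nat.mod_eq_of_lt m1.isLt
    · apply Fin.ext
      simp only [Fin.val_mk]
      rw [he, Nat.add_mul_mod_self_right]
      exact Nat.mod_eq_of_lt m2.isLt
  have herr0 := avgErr_eq_zero d f1c f2c gc hg
  rw [herr0]
  linarith


/- ======== ACC-MAC achievability construction ======== -/

/-- Encoder 1 for the ACC-MAC: sync prefix `2^a 4^(a+b+1)`, then `m` data bits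
of `v` coded `1 ↦ 4`, `0 ↦ 2`, then `4`s. -/
def accX1 (a b m v : ℕ) {n : ℕ} : Fin n → X1ex := fun i =>
  if (i:ℕ) < a then ⟨2, by decide⟩
  else if (i:ℕ) < 2*a+b+1 then ⟨4, by decide⟩
  else if (i:ℕ) < 2*a+b+1+m then
    (if v / 2^((i:ℕ) - (2*a+b+1)) % 2 = 1 then ⟨4, by decide⟩ else ⟨2, by decide⟩)
  else ⟨4, by decide⟩

/-- Encoder 2 for the ACC-MAC: parity bits of `w` via symbols in `{2,3}` on the
first `E = m+2a+2b+1` positions, then base-4 digits of `w / 2^E`. -/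
def accX2 (a b m w : ℕ) {n : ℕ} : Fin n → Fin 4 := fun i =>
  if (i:ℕ) < m+2*a+2*b+1 then ⟨2 + (w % 2^(m+2*a+2*b+1)) / 2^((i:ℕ)) % 2, by omega⟩
  else ⟨(w / 2^(m+2*a+2*b+1)) / 4^((i:ℕ) - (m+2*a+2*b+1)) % 4, by omega⟩

/-- read position `k` of `y`, as above -/
def accCnt (a b : ℕ) {n : ℕ} (y : Fin n → Fin 4) : ℕ :=
  ∑ i ∈ Finset.range (a+b+1), if geti y i < 2 then 1 else 0

def accD1 (a b m : ℕ) {n : ℕ} (y : Fin n → Fin 4) : ℕ :=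
  ∑ j ∈ Finset.range m,
    (if 2 ≤ geti y (accCnt a b y + (a+b+1) + j) then 1 else 0) * 2^j

def accD2 (a b m m' : ℕ) {n : ℕ} (y : Fin n → Fin 4) : ℕ :=
  (∑ i ∈ Finset.range (m+2*a+2*b+1), (geti y i % 2) * 2^i)
  + 2^(m+2*a+2*b+1) * ∑ j ∈ Finset.range m', geti y ((m+2*a+2*b+1) + j) * 4^j

def accDec (a b m m' : ℕ) {n : ℕ} (y : Fin n → Fin 4) :
    Fin (2^m) × Fin (2^((m+2*a+2*b+1)+2*m')) :=
  (⟨accD1 a b m y % 2^m, Nat.mod_lt _ (by positivity)⟩,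
   ⟨accD2 a b m m' y % 2^((m+2*a+2*b+1)+2*m'), Nat.mod_lt _ (by positivity)⟩)

lemma acc_correct (a b m m' n : ℕ) (hn : m + m' + (3*a+2*b+1) ≤ n)
    (d : ℤ) (hd1 : -(a:ℤ) ≤ d) (hd2 : d ≤ (b:ℤ))
    (m1 : Fin (2^m)) (m2 : Fin (2^((m+2*a+2*b+1)+2*m'))) :
    accDec a b m m' (outF d (accX1 a b m (m1:ℕ) (n:=n)) (accX2 a b m (m2:ℕ) (n:=n))) = (m1, m2) := by
  set x1 : Fin n → X1ex := accX1 a b m (m1:ℕ) with hx1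
  set x2 : Fin n → Fin 4 := accX2 a b m (m2:ℕ) with hx2
  set y : Fin n → Fin 4 := outF d x1 x2 with hy
  -- value of the (delayed) x1 symbol
  have hxv : ∀ (j : ℤ), ((extVec x1 j : X1ex) : ℕ) =
      if 0 ≤ j ∧ j < (n:ℤ) then
        (if j < (a:ℤ) then 2
         else if j < 2*(a:ℤ)+(b:ℤ)+1 then 4
         else if j < 2*(a:ℤ)+(b:ℤ)+1+(m:ℤ) then
           (if (m1:ℕ) / 2^(j.toNat - (2*a+b+1)) % 2 = 1 then 4 else 2)
         else 4)
      else 2 := by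
    intro j
    rw [extVec]
    by_cases h : 0 ≤ j ∧ j < (n:ℤ)
    · rw [dif_pos h, if_pos h, hx1]
      unfold accX1
      simp only [Fin.val_mk]
      have h0 : (j.toNat : ℤ) = j := Int.toNat_of_nonneg h.1
      split_ifs <;> first | rfl | (exfalso; omega)
    · rw [dif_neg h, if_neg h]
      rfl
  have hxv24 : ∀ (j : ℤ), ((extVec x1 j : X1ex) : ℕ) = 2 ∨ ((extVec x1 j : X1ex) : ℕ) = 4 := by
    intro j
    rw [hxv]
    split_ifs <;> simp
  have hyval : ∀ i : Fin n, (y i : ℕ) = (x2 i : ℕ) % ((extVec x1 (((i:ℕ):ℤ) - d) : X1ex) : ℕ) := by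
    intro i
    rw [hy]
    rfl
  have hx2lo : ∀ i : Fin n, (i:ℕ) < m+2*a+2*b+1 →
      (x2 i : ℕ) = 2 + ((m2:ℕ) % 2^(m+2*a+2*b+1)) / 2^((i:ℕ)) % 2 := by
    intro i hi'
    rw [hx2]
    unfold accX2
    rw [if_pos hi']
  have hx2hi : ∀ i : Fin n, m+2*a+2*b+1 ≤ (i:ℕ) →
      (x2 i : ℕ) = ((m2:ℕ) / 2^(m+2*a+2*b+1)) / 4^((i:ℕ) - (m+2*a+2*b+1)) % 4 := by
    intro i hi'
    rw [hx2]
    unfold accX2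
    rw [if_neg (by omega)]
  -- C1: marker window bits
  have hbit : ∀ i : Fin n, (i:ℕ) < a+b+1 →
      ((if (y i : ℕ) < 2 then (1:ℕ) else 0) = if ((i:ℕ):ℤ) < (a:ℤ) + d then 1 else 0) := by
    intro i hiW
    have hx2i := hx2lo i (by omega)
    set β := ((m2:ℕ) % 2^(m+2*a+2*b+1)) / 2^((i:ℕ)) % 2 with hβd
    have hβ : β < 2 := Nat.mod_lt _ (by norm_num)
    have hxvJ : ((extVec x1 (((i:ℕ):ℤ) - d) : X1ex) : ℕ)
        = if ((i:ℕ):ℤ) < (a:ℤ) + d then 2 else 4 := by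
      rw [hxv]
      split_ifs <;> omega
    rw [hyval i, hx2i, hxvJ]
    by_cases hc : ((i:ℕ):ℤ) < (a:ℤ) + d
    · rw [if_pos hc, if_pos hc, if_pos (show (2+β) % 2 < 2 by omega)]
    · rw [if_neg hc, if_neg hc, if_neg (show ¬((2+β) % 4 < 2) by omega)]
  -- C2: the counter recovers the delay
  obtain ⟨cd, hcd1, hcd2⟩ : ∃ cd : ℕ, (cd:ℤ) = (a:ℤ) + d ∧ cd ≤ a+b := by
    refine ⟨((a:ℤ)+d).toNat, ?_, ?_⟩
    · rw [Int.toNat_of_nonneg (by omega)]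
    · omega
  have hcnt : accCnt a b y = cd := by
    unfold accCnt
    rw [← sum_ind_lt (a+b+1) cd (by omega)]
    apply Finset.sum_congr rfl
    intro i hi'
    rw [Finset.mem_range] at hi'
    have hin : i < n := by omega
    unfold geti
    rw [dif_pos hin]
    have hb := hbit ⟨i, hin⟩ (by simpa using hi')
    simp only [Fin.val_mk] at hb
    rw [hb]
    by_cases hc : i < cd
    · rw [if_pos (show ((i:ℕ):ℤ) < (a:ℤ) + d by omega), if_pos hc]
    · rw [if_neg (show ¬(((i:ℕ):ℤ) < (a:ℤ) + d) by omega), if_neg hc]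
  -- C3: decoding message 1
  have hD1 : accD1 a b m y = (m1:ℕ) := by
    unfold accD1
    rw [hcnt]
    rw [← sum_div_pow_mod 2 m (m1:ℕ) m1.isLt]
    apply Finset.sum_congr rfl
    intro j hj
    rw [Finset.mem_range] at hj
    set idx := cd + (a+b+1) + j with hidx
    have hidxn : idx < n := by omega
    have hJ : ((idx:ℕ):ℤ) - d = ((2*a+b+1+j : ℕ) : ℤ) := by push_cast; omega
    have hJrange : (0:ℤ) ≤ ((idx:ℕ):ℤ) - d ∧ ((idx:ℕ):ℤ) - d < (n:ℤ) := by
      constructor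
      · omega
      · rw [hJ]; push_cast; omega
    have htn : (((2*a+b+1+j : ℕ) : ℤ)).toNat - (2*a+b+1) = j := by omega
    have hxvJ : ((extVec x1 (((idx:ℕ):ℤ) - d) : X1ex) : ℕ)
        = if (m1:ℕ) / 2^j % 2 = 1 then 4 else 2 := by
      rw [hxv, if_pos hJrange, hJ, htn]
      split_ifs <;> first | rfl | (exfalso; omega)
    unfold geti
    rw [dif_pos hidxn]
    have hx2i : (x2 ⟨idx, hidxn⟩ : ℕ)
        = 2 + ((m2:ℕ) % 2^(m+2*a+2*b+1)) / 2^idx % 2 := by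
      have := hx2lo ⟨idx, hidxn⟩ (by simp only [Fin.val_mk]; omega)
      simpa using this
    set β := ((m2:ℕ) % 2^(m+2*a+2*b+1)) / 2^idx % 2 with hβd
    have hβ : β < 2 := Nat.mod_lt _ (by norm_num)
    have hyv := hyval ⟨idx, hidxn⟩
    simp only [Fin.val_mk] at hyv
    rw [hyv, hx2i, hxvJ]
    by_cases hbitj : (m1:ℕ) / 2^j % 2 = 1
    · rw [if_pos hbitj, hbitj, if_pos (show 2 ≤ (2+β) % 4 by omega)]
    · rw [if_neg hbitj]
      have hb0 : (m1:ℕ) / 2^j % 2 = 0 := by omega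
      rw [hb0, if_neg (show ¬(2 ≤ (2+β) % 2) by omega)]
  -- C4 + C5: decoding message 2
  have hD2 : accD2 a b m m' y = (m2:ℕ) := by
    unfold accD2
    have hpar : (∑ i ∈ Finset.range (m+2*a+2*b+1), (geti y i % 2) * 2^i)
        = ∑ i ∈ Finset.range (m+2*a+2*b+1),
            (((m2:ℕ) % 2^(m+2*a+2*b+1)) / 2^i % 2) * 2^i := by
      apply Finset.sum_congr rfl
      intro i hi'
      rw [Finset.mem_range] at hi'
      have hin : i < n := by omega
      unfold geti
      rw [dif_pos hin]
      have hx2i : (x2 ⟨i, hin⟩ : ℕ)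
          = 2 + ((m2:ℕ) % 2^(m+2*a+2*b+1)) / 2^i % 2 := by
        have := hx2lo ⟨i, hin⟩ (by simp only [Fin.val_mk]; omega)
        simpa using this
      set β := ((m2:ℕ) % 2^(m+2*a+2*b+1)) / 2^i % 2 with hβd
      have hβ : β < 2 := Nat.mod_lt _ (by norm_num)
      have hyv := hyval ⟨i, hin⟩
      simp only [Fin.val_mk] at hyv
      rw [hyv, hx2i]
      congr 1
      rcases hxv24 (((i:ℕ):ℤ) - d) with h24 | h24 <;> rw [h24] <;> omega
    have hdig : (∑ j ∈ Finset.range m', geti y ((m+2*a+2*b+1) + j) * 4^j)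
        = ∑ j ∈ Finset.range m',
            (((m2:ℕ) / 2^(m+2*a+2*b+1)) / 4^j % 4) * 4^j := by
      apply Finset.sum_congr rfl
      intro j hj
      rw [Finset.mem_range] at hj
      have hin : (m+2*a+2*b+1) + j < n := by omega
      unfold geti
      rw [dif_pos hin]
      have hx2i : (x2 ⟨(m+2*a+2*b+1) + j, hin⟩ : ℕ)
          = ((m2:ℕ) / 2^(m+2*a+2*b+1)) / 4^j % 4 := by
        have := hx2hi ⟨(m+2*a+2*b+1) + j, hin⟩ (by simp only [Fin.val_mk]; omega)
        simp only [Fin.val_mk] at this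
        rw [this]
        have hexp : (m+2*a+2*b+1) + j - (m+2*a+2*b+1) = j := by omega
        rw [hexp]
      have hxvJ : ((extVec x1 ((((m+2*a+2*b+1) + j : ℕ):ℤ) - d) : X1ex) : ℕ) = 4 := by
        rw [hxv]
        rw [if_pos (by push_cast; omega)]
        rw [if_neg (by push_cast; omega), if_neg (by push_cast; omega),
          if_neg (by push_cast; omega)]
      have hyv := hyval ⟨(m+2*a+2*b+1) + j, hin⟩
      simp only [Fin.val_mk] at hyv
      rw [hyv, hx2i, hxvJ]
      congr 1
      set γ := ((m2:ℕ) / 2^(m+2*a+2*b+1)) / 4^j % 4 with hγd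
      have hγ : γ < 4 := Nat.mod_lt _ (by norm_num)
      omega
    rw [hpar, hdig]
    have hloE : (m2:ℕ) % 2^(m+2*a+2*b+1) < 2^(m+2*a+2*b+1) := Nat.mod_lt _ (by positivity)
    have hhiM : (m2:ℕ) / 2^(m+2*a+2*b+1) < 4^m' := by
      apply Nat.div_lt_of_lt_mul
      have h1 : (2:ℕ)^((m+2*a+2*b+1)+2*m') = 2^(m+2*a+2*b+1) * 4^m' := by
        rw [pow_add]
        have h2 : (2:ℕ)^(2*m') = 4^m' := by
          rw [pow_mul]
          norm_num
        rw [h2]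
      rw [← h1]
      exact m2.isLt
    rw [sum_div_pow_mod 2 (m+2*a+2*b+1) _ hloE, sum_div_pow_mod 4 m' _ hhiM]
    exact Nat.mod_add_div _ _
  -- conclude
  unfold accDec
  apply Prod.ext
  · apply Fin.ext
    show accD1 a b m y % 2^m = (m1:ℕ)
    rw [hD1]
    exact Nat.mod_eq_of_lt m1.isLt
  · apply Fin.ext
    show accD2 a b m m' y % 2^((m+2*a+2*b+1)+2*m') = (m2:ℕ)
    rw [hD2]
    exact Nat.mod_eq_of_lt m2.isLt

lemma acc_ach (dmin dmax : ℕ) (R : ℝ × ℝ) (h1 : 0 ≤ R.1) (h2 : 0 ≤ R.2)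
    (hR1 : R.1 < 1) (hs : R.1 + R.2 < 2) : ACCMACAchievable Wex dmin dmax R := by
  refine ⟨h1, h2, ?_⟩
  set C : ℕ := 3*dmin+2*dmax+1 with hC
  set w := max R.1 ((R.1+R.2)/2) with hw
  have hw1 : w < 1 := by
    apply max_lt hR1
    linarith
  have hw0 : 0 ≤ w := le_trans h1 (le_max_left _ _)
  have h1w : 0 < 1 - w := by linarith
  obtain ⟨n, hn⟩ := exists_nat_gt ((2 + (C:ℝ)) / (1 - w))
  have hnlarge : (n:ℝ) * w + 2 + C < n := by
    have := (div_lt_iff₀ h1w).mp hn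
    nlinarith
  set m := ⌈(n:ℝ) * R.1⌉₊ with hm
  set m' := ⌈((n:ℝ) * R.2 - m)/2⌉₊ with hm'
  have hmge : (n:ℝ) * R.1 ≤ m := Nat.le_ceil _
  have hmle : (m:ℝ) ≤ (n:ℝ) * R.1 + 1 := le_of_lt (Nat.ceil_lt_add_one (by positivity))
  have hm'ge : ((n:ℝ) * R.2 - m)/2 ≤ m' := Nat.le_ceil _
  have hww1 : (n:ℝ) * R.1 ≤ (n:ℝ) * w :=
    mul_le_mul_of_nonneg_left (le_max_left _ _) (Nat.cast_nonneg n)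
  have hww2 : (n:ℝ) * ((R.1+R.2)/2) ≤ (n:ℝ) * w :=
    mul_le_mul_of_nonneg_left (le_max_right _ _) (Nat.cast_nonneg n)
  have hkey : (m:ℝ) + m' ≤ (n:ℝ)*w + 2 := by
    rcases le_or_gt (((n:ℝ)*R.2 - m)/2) 0 with hc | hc
    · have hm'0 : m' = 0 := by rw [hm']; exact Nat.ceil_eq_zero.mpr hc
      rw [hm'0]
      push_cast
      linarith
    · have h' := Nat.ceil_lt_add_one (le_of_lt hc)
      have hm'le : (m':ℝ) ≤ ((n:ℝ)*R.2 - m)/2 + 1 := by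
        rw [hm']; linarith
      linarith
  have hCr : (C:ℝ) = 3*(dmin:ℝ)+2*(dmax:ℝ)+1 := by rw [hC]; push_cast; ring
  have hnm : m + m' + C ≤ n := by
    have hr : ((m + m' + C : ℕ):ℝ) < n := by push_cast; linarith [hCr]
    exact_mod_cast le_of_lt hr
  have hnpos : 0 < n := by
    have hr : (0:ℝ) < n := by
      have hC0 : (0:ℝ) ≤ (C:ℝ) := Nat.cast_nonneg _
      nlinarith
    exact_mod_cast hr
  have hrate1 : (2:ℝ)^((n:ℝ)*R.1) ≤ (((2:ℕ)^m : ℕ):ℝ) := by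
    rw [← rpow_nat_eq]
    exact rpow_mono hmge
  have hrate2 : (2:ℝ)^((n:ℝ)*R.2) ≤ (((2:ℕ)^((m+2*dmin+2*dmax+1)+2*m') : ℕ):ℝ) := by
    rw [← rpow_nat_eq]
    apply rpow_mono
    push_cast
    linarith
  intro ε hε
  refine ⟨n, 2^m, 2^((m+2*dmin+2*dmax+1)+2*m'),
    (fun m1 => accX1 dmin dmax m (m1:ℕ)),
    (fun _ m2 => accX2 dmin dmax m (m2:ℕ)),
    accDec dmin dmax m m', hnpos, hrate1, hrate2, ?_⟩
  intro d hd
  rw [delaySet, Finset.mem_Icc] at hd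
  have hg : ∀ mm : Fin (2^m) × Fin (2^((m+2*dmin+2*dmax+1)+2*m')),
      accDec dmin dmax m m'
        (outF d (accX1 dmin dmax m (mm.1:ℕ) (n:=n)) (accX2 dmin dmax m (mm.2:ℕ) (n:=n))) = mm := by
    intro mm
    have := acc_correct dmin dmax m m' n (by omega) d hd.1 hd.2 mm.1 mm.2
    rwa [Prod.mk.eta] at this
  have h0 := avgErr_eq_zero d (fun m1 => accX1 dmin dmax m (m1:ℕ))
    (fun m1 m2 => accX2 dmin dmax m (m2:ℕ)) (accDec dmin dmax m m') hg
  rw [h0]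
  linarith



lemma mem_closure_scale (A : Set (ℝ×ℝ)) (R : ℝ×ℝ)
    (hA : ∀ t : ℝ, 0 ≤ t → t < 1 → (t*R.1, t*R.2) ∈ A) : R ∈ closure A := by
  have h0 : Filter.Tendsto (fun k : ℕ => 1/((k:ℝ)+1)) Filter.atTop (nhds 0) :=
    tendsto_one_div_add_atTop_nhds_zero_nat
  have ht : Filter.Tendsto (fun k : ℕ => 1 - 1/((k:ℝ)+1)) Filter.atTop (nhds 1) := by
    have := h0.const_sub 1
    simpa using this
  have h1t := ht.mul_const R.1
  have h2t := ht.mul_const R.2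
  rw [one_mul] at h1t h2t
  have htend : Filter.Tendsto
      (fun k : ℕ => ((1 - 1/((k:ℝ)+1)) * R.1, (1 - 1/((k:ℝ)+1)) * R.2))
      Filter.atTop (nhds R) := by
    have := h1t.prodMk_nhds h2t
    simpa using this
  apply mem_closure_of_tendsto htend
  filter_upwards with k
  apply hA
  · have hk : (0:ℝ) < (k:ℝ)+1 := by positivity
    have h1k : 1/((k:ℝ)+1) ≤ 1 := by
      rw [div_le_one hk]; linarith
    linarith
  · have hk : (0:ℝ) < 1/((k:ℝ)+1) := by positivity
    linarith

lemma triangle_closed : IsClosed {R : ℝ×ℝ | 0 ≤ R.1 ∧ 0 ≤ R.2 ∧ R.1+R.2 ≤ 2} := by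
  have heq : {R : ℝ×ℝ | 0 ≤ R.1 ∧ 0 ≤ R.2 ∧ R.1+R.2 ≤ 2}
      = {R : ℝ×ℝ | 0 ≤ R.1} ∩ ({R : ℝ×ℝ | 0 ≤ R.2} ∩ {R : ℝ×ℝ | R.1+R.2 ≤ 2}) := by
    ext R; simp [Set.mem_inter_iff, and_assoc]
  rw [heq]
  exact (isClosed_le continuous_const continuous_fst).inter
    ((isClosed_le continuous_const continuous_snd).inter
      (isClosed_le (continuous_fst.add continuous_snd) continuous_const))

lemma trapezoid_closed :
    IsClosed {R : ℝ×ℝ | 0 ≤ R.1 ∧ 0 ≤ R.2 ∧ R.1 ≤ 1 ∧ R.1+R.2 ≤ 2} := by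
  have heq : {R : ℝ×ℝ | 0 ≤ R.1 ∧ 0 ≤ R.2 ∧ R.1 ≤ 1 ∧ R.1+R.2 ≤ 2}
      = {R : ℝ×ℝ | 0 ≤ R.1} ∩ ({R : ℝ×ℝ | 0 ≤ R.2} ∩
        ({R : ℝ×ℝ | R.1 ≤ 1} ∩ {R : ℝ×ℝ | R.1+R.2 ≤ 2})) := by
    ext R; simp [Set.mem_inter_iff, and_assoc]
  rw [heq]
  exact (isClosed_le continuous_const continuous_fst).inter
    ((isClosed_le continuous_const continuous_snd).inter
      ((isClosed_le continuous_fst continuous_const).inter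
        (isClosed_le (continuous_fst.add continuous_snd) continuous_const)))

lemma acmac_cap (dmin dmax : ℕ) :
    ACMACCapacity Wex dmin dmax = {R : ℝ×ℝ | 0 ≤ R.1 ∧ 0 ≤ R.2 ∧ R.1+R.2 ≤ 2} := by
  apply Set.Subset.antisymm
  · apply closure_minimal ?_ triangle_closed
    intro R hR
    obtain ⟨h1, h2, hach⟩ := hR
    refine ⟨h1, h2, ?_⟩
    apply rate_sum_le_two h1 h2
    intro ε hε
    obtain ⟨n, K1, K2, f1, f2, g, hn, hK1, hK2, herr⟩ := hach ε hε
    exact ⟨n, K1, K2, f1, f2, g, hn, hK1, hK2,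
      herr 0 (by unfold delaySet; rw [Finset.mem_Icc]; omega)⟩
  · intro R hR
    obtain ⟨h1, h2, hsum⟩ := hR
    apply mem_closure_scale
    intro t ht0 ht1
    show ACMACAchievable Wex dmin dmax (t*R.1, t*R.2)
    have hx : (0:ℝ) ≤ t * R.1 := mul_nonneg ht0 h1
    have hy : (0:ℝ) ≤ t * R.2 := mul_nonneg ht0 h2
    have hz : t * R.1 + t * R.2 < 2 := by nlinarith
    exact acmac_ach dmin dmax (t*R.1, t*R.2) hx hy hz
    
lemma accmac_cap (dmin dmax : ℕ) :
    ACCMACCapacity Wex dmin dmax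
      = {R : ℝ×ℝ | 0 ≤ R.1 ∧ 0 ≤ R.2 ∧ R.1 ≤ 1 ∧ R.1+R.2 ≤ 2} := by
  apply Set.Subset.antisymm
  · apply closure_minimal ?_ trapezoid_closed
    intro R hR
    obtain ⟨h1, h2, hach⟩ := hR
    refine ⟨h1, h2, ?_, ?_⟩
    · apply rate_R1_le_one h1 h2
      intro ε hε
      obtain ⟨n, K1, K2, f1, f2, g, hn, hK1, hK2, herr⟩ := hach ε hε
      exact ⟨n, K1, K2, f1, f2, g, hn, hK1, hK2,
        herr 0 (by unfold delaySet; rw [Finset.mem_Icc]; omega)⟩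
    · apply rate_sum_le_two h1 h2
      intro ε hε
      obtain ⟨n, K1, K2, f1, f2, g, hn, hK1, hK2, herr⟩ := hach ε hε
      exact ⟨n, K1, K2, f1, (fun m1 m2 => f2 (f1 m1) m2), g, hn, hK1, hK2,
        herr 0 (by unfold delaySet; rw [Finset.mem_Icc]; omega)⟩
  · intro R hR
    obtain ⟨h1, h2, hone, hsum⟩ := hR
    apply mem_closure_scale
    intro t ht0 ht1
    show ACCMACAchievable Wex dmin dmax (t*R.1, t*R.2)
    have hx : (0:ℝ) ≤ t * R.1 := mul_nonneg ht0 h1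
    have hy : (0:ℝ) ≤ t * R.2 := mul_nonneg ht0 h2
    have hz1 : t * R.1 < 1 := by nlinarith
    have hz : t * R.1 + t * R.2 < 2 := by nlinarith
    exact acc_ach dmin dmax (t*R.1, t*R.2) hx hy hz1 hz


/-- **Example (codeword vs. message side-information).** For the channel
`Y = X2 mod X1` with `X1 = {2,4}`, `X2 = Y = {0,1,2,3}`, and every finite
bounded delay set, the capacity region of the ACC-MAC is the trapezoid
`{R1 ≤ 1, R1+R2 ≤ 2}` and is *strictly* contained in the capacity region of
the ACMAC, which is the triangle `{R1+R2 ≤ 2}` (rates in bits, `R1,R2 ≥ 0`):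
codeword side-information can be strictly weaker than message
side-information. -/
theorem example_accmac_strictly_smaller (dmin dmax : ℕ) :
    ACCMACCapacity Wex dmin dmax
        = {R : ℝ × ℝ | 0 ≤ R.1 ∧ 0 ≤ R.2 ∧ R.1 ≤ 1 ∧ R.1 + R.2 ≤ 2} ∧
    ACMACCapacity Wex dmin dmax
        = {R : ℝ × ℝ | 0 ≤ R.1 ∧ 0 ≤ R.2 ∧ R.1 + R.2 ≤ 2} ∧
    ACCMACCapacity Wex dmin dmax ⊂ ACMACCapacity Wex dmin dmax := by
  refine ⟨accmac_cap dmin dmax, acmac_cap dmin dmax, ?_⟩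
  rw [accmac_cap dmin dmax, acmac_cap dmin dmax]
  constructor
  · intro R hR
    obtain ⟨ha, hb, hc, hd⟩ := hR
    exact ⟨ha, hb, hd⟩
  · intro hcon
    have h2 : ((2:ℝ), (0:ℝ)) ∈ {R : ℝ × ℝ | 0 ≤ R.1 ∧ 0 ≤ R.2 ∧ R.1 + R.2 ≤ 2} := by
      refine ⟨by norm_num, le_refl _, by norm_num⟩
    have := hcon h2
    obtain ⟨-, -, hle, -⟩ := this
    norm_num at hle


end ACMACPaper
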